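/- Let A be an operator with bounded norms ‖A‖_{-k,l} (operator norms H^{-k} → H^l) for all k, l ∈ ℕ₀, where H^s denotes a scale of Hilbert spaces with continuous inclusions H^s ⊂ H^t for s ≥ t. If f(x) = Σ_{i≥1} a_i x^i is a power series with radius of convergence strictly greater than ‖A‖_{0,0}, then for all k, l ∈ ℕ₀ the series Σ_{i≥1} a_i A^i converges absolutely in the norm ‖·‖_{-k,l}, with bound ‖f(A)‖_{-k,l} ≤ |a₁|‖A‖_{-k,l} + Σ_{i≥2} |a_i| ‖A‖_{0,l} ‖A‖_{0,0}^{i-2} ‖A‖_{-k,0}. -/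

import Mathlib

/-- The power `A^(i+1)` regarded as an operator `H^{-k} → H^l`, factored through `H^0`:
`powKL A k l 0 = A : H^{-k} → H^l` and for `i ≥ 1`,
`powKL A k l i = A ∘ A^{i-1} ∘ A : H^{-k} → H⁰ → H⁰ → H^l`. -/
noncomputable def powKL {H : ℤ → Type*} [∀ s, NormedAddCommGroup (H s)]
    [∀ s, NormedSpace ℂ (H s)]
    (A : ∀ s t : ℤ, H s →L[ℂ] H t) (k l : ℕ) : ℕ → (H (-(k : ℤ)) →L[ℂ] H (l : ℤ))
  | 0 => A (-(k : ℤ)) (l : ℤ)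
  | (i + 1) => (A 0 (l : ℤ)).comp (((A 0 0) ^ i).comp (A (-(k : ℤ)) 0))

set_option maxHeartbeats 1000000 in
/-- let `(H^s)_{s ∈ ℤ}` be a scale of spaces with continuous inclusions
`J : H^s → H^t` for `t ≤ s`, and let `A` be an operator on the scale with bounded norms
`‖A‖_{-k,l}` for all `k, l ∈ ℕ`.  If `f(x) = ∑_{i ≥ 1} aᵢ xⁱ` is a power series with
radius of convergence strictly greater than `‖A‖_{0,0}`, then for all `k, l ∈ ℕ` the
series `∑_{i ≥ 1} aᵢ Aⁱ` converges absolutely in the norm `‖·‖_{-k,l}`, with bound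
`‖f(A)‖_{-k,l} ≤ |a₁| ‖A‖_{-k,l} + ∑_{i ≥ 2} |aᵢ| ‖A‖_{0,l} ‖A‖_{0,0}^{i-2} ‖A‖_{-k,0}`. -/
theorem power_series_of_operator_on_scale
    {H : ℤ → Type*} [∀ s, NormedAddCommGroup (H s)] [∀ s, NormedSpace ℂ (H s)]
    [∀ s, CompleteSpace (H s)]
    (J : ∀ s t : ℤ, t ≤ s → (H s →L[ℂ] H t))
    (A : ∀ s t : ℤ, H s →L[ℂ] H t)
    (hcompat : ∀ (s t s' t' : ℤ) (hs : s' ≤ s) (ht : t' ≤ t),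
      (J t t' ht).comp (A s t) = (A s' t').comp (J s s' hs))
    (a : ℕ → ℂ) (x : ℝ) (hx : ‖A 0 0‖ < x)
    (hconv : Summable fun i : ℕ => ‖a i‖ * x ^ i) :
    ∀ k l : ℕ,
      Summable (fun i : ℕ => ‖a (i + 1)‖ * ‖powKL A k l i‖) ∧
      ‖∑' i : ℕ, a (i + 1) • powKL A k l i‖ ≤
        ‖a 1‖ * ‖A (-(k : ℤ)) (l : ℤ)‖ +
          ∑' i : ℕ, ‖a (i + 2)‖ * (‖A 0 (l : ℤ)‖ * ‖A 0 0‖ ^ i * ‖A (-(k : ℤ)) 0‖) := by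
  intro k l
  have hx0 : (0:ℝ) < x := lt_of_le_of_lt (norm_nonneg _) hx
  -- bound on powKL (i+1)
  have hbound : ∀ i : ℕ, ‖powKL A k l (i + 1)‖ ≤
      ‖A 0 (l : ℤ)‖ * ‖A 0 0‖ ^ i * ‖A (-(k : ℤ)) 0‖ := by
    intro i
    have h1 : ‖(A 0 0) ^ i‖ ≤ ‖A 0 0‖ ^ i := by
      rcases Nat.eq_zero_or_pos i with h | h
      · subst h; rw [pow_zero, pow_zero]; exact ContinuousLinearMap.norm_id_le
      · exact norm_pow_le' _ h
    calc ‖powKL A k l (i + 1)‖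
        ≤ ‖A 0 (l : ℤ)‖ * ‖((A 0 0) ^ i).comp (A (-(k : ℤ)) 0)‖ := by
          show ‖(A 0 (l : ℤ)).comp (((A 0 0) ^ i).comp (A (-(k : ℤ)) 0))‖ ≤ _
          exact ContinuousLinearMap.opNorm_comp_le _ _
      _ ≤ ‖A 0 (l : ℤ)‖ * (‖(A 0 0) ^ i‖ * ‖A (-(k : ℤ)) 0‖) := by
          exact mul_le_mul_of_nonneg_left (ContinuousLinearMap.opNorm_comp_le _ _)
            (norm_nonneg _)
      _ ≤ ‖A 0 (l : ℤ)‖ * (‖A 0 0‖ ^ i * ‖A (-(k : ℤ)) 0‖) := by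
          exact mul_le_mul_of_nonneg_left
            (mul_le_mul_of_nonneg_right h1 (norm_nonneg _)) (norm_nonneg _)
      _ = ‖A 0 (l : ℤ)‖ * ‖A 0 0‖ ^ i * ‖A (-(k : ℤ)) 0‖ := by ring
  set g : ℕ → ℝ := fun i => ‖a (i + 1)‖ * ‖powKL A k l i‖ with hg
  set h : ℕ → ℝ := fun i =>
    ‖a (i + 2)‖ * (‖A 0 (l : ℤ)‖ * ‖A 0 0‖ ^ i * ‖A (-(k : ℤ)) 0‖) with hh
  -- summability of the comparison series
  have hsum2 : Summable fun i : ℕ => ‖a (i + 2)‖ * x ^ (i + 2) :=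
    (summable_nat_add_iff 2).mpr hconv
  have hsum2' : Summable fun i : ℕ => ‖a (i + 2)‖ * x ^ i := by
    have hne : x ^ 2 ≠ 0 := pow_ne_zero _ (ne_of_gt hx0)
    have := hsum2.div_const (x ^ 2)
    refine this.congr fun i => ?_
    field_simp
    ring
  have hhsum : Summable h := by
    refine Summable.of_nonneg_of_le (fun i => ?_) (fun i => ?_)
      (hsum2'.mul_right (‖A 0 (l : ℤ)‖ * ‖A (-(k : ℤ)) 0‖))
    · positivity
    · have hle : ‖A 0 0‖ ^ i ≤ x ^ i :=
        pow_le_pow_left₀ (norm_nonneg _) (le_of_lt hx) i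
      calc h i = ‖a (i + 2)‖ * ‖A 0 0‖ ^ i * (‖A 0 (l : ℤ)‖ * ‖A (-(k : ℤ)) 0‖) := by
            simp only [hh]; ring
        _ ≤ ‖a (i + 2)‖ * x ^ i * (‖A 0 (l : ℤ)‖ * ‖A (-(k : ℤ)) 0‖) := by
            have : ‖a (i + 2)‖ * ‖A 0 0‖ ^ i ≤ ‖a (i + 2)‖ * x ^ i :=
              mul_le_mul_of_nonneg_left hle (norm_nonneg _)
            exact mul_le_mul_of_nonneg_right this (by positivity)
  have hgle : ∀ i : ℕ, g (i + 1) ≤ h i := fun i =>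
    mul_le_mul_of_nonneg_left (hbound i) (norm_nonneg _)
  have hgsum' : Summable fun i : ℕ => g (i + 1) :=
    Summable.of_nonneg_of_le (fun i => by positivity) hgle hhsum
  have hgsum : Summable g := (summable_nat_add_iff 1).mp hgsum'
  refine ⟨hgsum, ?_⟩
  have hnsum : Summable fun i : ℕ => ‖a (i + 1) • powKL A k l i‖ := by
    refine hgsum.congr fun i => ?_
    exact (norm_smul (a (i + 1)) (powKL A k l i)).symm
  calc ‖∑' i : ℕ, a (i + 1) • powKL A k l i‖
      ≤ ∑' i : ℕ, ‖a (i + 1) • powKL A k l i‖ := norm_tsum_le_tsum_norm hnsum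
    _ = ∑' i : ℕ, g i := by
        refine tsum_congr fun i => ?_
        exact norm_smul (a (i + 1)) (powKL A k l i)
    _ = g 0 + ∑' i : ℕ, g (i + 1) := Summable.tsum_eq_zero_add hgsum
    _ ≤ g 0 + ∑' i : ℕ, h i := by
        exact add_le_add le_rfl (Summable.tsum_le_tsum hgle hgsum' hhsum)
    _ = ‖a 1‖ * ‖A (-(k : ℤ)) (l : ℤ)‖ + ∑' i : ℕ, h i := by
        simp [g, powKL]
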